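/- Let M be a matroid on E = {1,...,n} with set of bases 𝔅, and let ξ = Σ_{B ∈ 𝔅} c_B · Π_{i∈B} xᵢ with all c_B ∈ K nonzero. If M is connected and has positive rank, then ξ is an irreducible polynomial in K[x₁,...,xₙ]. -/

import Mathlib

open MvPolynomial
open scoped Classical

section Aux

variable {K : Type*} [Field K] {n : ℕ}

private lemma aux_eq_C_of_support (P : MvPolynomial (Fin n) K)
    (h : ∀ m ∈ P.support, m = (0 : Fin n →₀ ℕ)) : P = C (P.coeff 0) := by
  ext m
  by_cases hm : m = 0
  · subst hm; simp
  · have h1 : P.coeff m = 0 := by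
      by_contra hne
      exact hm (h m (mem_support_iff.mpr hne))
    rw [h1, coeff_C, if_neg (fun h' => hm h'.symm)]

private lemma aux_isUnit (P : MvPolynomial (Fin n) K) (hP : P ≠ 0)
    (h : ∀ m ∈ P.support, m = (0 : Fin n →₀ ℕ)) : IsUnit P := by
  have h2 := aux_eq_C_of_support P h
  have h0 : P.coeff 0 ≠ 0 := fun hc0 => hP (by rw [h2, hc0, map_zero])
  exact h2 ▸ (isUnit_iff_ne_zero.mpr h0).map (C : K →+* MvPolynomial (Fin n) K)

private lemma aux_support_of_isUnit {P : MvPolynomial (Fin n) K} (h : IsUnit P) :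
    ∀ m ∈ P.support, m = (0 : Fin n →₀ ℕ) := by
  obtain ⟨u, rfl⟩ := h
  intro m hm
  have hPne : (↑u : MvPolynomial (Fin n) K) ≠ 0 := Units.ne_zero u
  have hQne : (↑u⁻¹ : MvPolynomial (Fin n) K) ≠ 0 := Units.ne_zero u⁻¹
  set D : (Fin n →₀ ℕ) → Lex (Fin n →₀ ℕ) := fun m => toLex m with hDdef
  have hDinj : Function.Injective D := fun a b hab => toLex.injective hab
  have hadd : ∀ a b : Fin n →₀ ℕ, D (a + b) = D a + D b := fun a b => rfl
  have hlc : AddMonoidAlgebra.leadingCoeff D (↑u : MvPolynomial (Fin n) K) *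
      AddMonoidAlgebra.leadingCoeff D (↑u⁻¹ : MvPolynomial (Fin n) K) ≠ 0 :=
    mul_ne_zero ((AddMonoidAlgebra.leadingCoeff_ne_zero hDinj).mpr hPne)
      ((AddMonoidAlgebra.leadingCoeff_ne_zero hDinj).mpr hQne)
  have hmul := AddMonoidAlgebra.supDegree_mul hDinj hadd hlc hPne hQne
  rw [Units.mul_inv] at hmul
  have hone : AddMonoidAlgebra.supDegree D (1 : MvPolynomial (Fin n) K) = toLex 0 := by
    rw [AddMonoidAlgebra.one_def, AddMonoidAlgebra.supDegree_single_ne_zero _ one_ne_zero]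
  have hbot : ∀ x : Lex (Fin n →₀ ℕ), toLex 0 ≤ x := fun x =>
    (bot_le : (⊥ : Lex (Fin n →₀ ℕ)) ≤ x)
  have hsum : AddMonoidAlgebra.supDegree D (↑u : MvPolynomial (Fin n) K) +
      AddMonoidAlgebra.supDegree D (↑u⁻¹ : MvPolynomial (Fin n) K) = toLex 0 :=
    hmul.symm.trans hone
  have h1 : AddMonoidAlgebra.supDegree D (↑u : MvPolynomial (Fin n) K) ≤ toLex 0 := by
    calc AddMonoidAlgebra.supDegree D (↑u : MvPolynomial (Fin n) K)
        ≤ AddMonoidAlgebra.supDegree D (↑u : MvPolynomial (Fin n) K) +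
          AddMonoidAlgebra.supDegree D (↑u⁻¹ : MvPolynomial (Fin n) K) :=
          le_add_of_nonneg_right (hbot _)
      _ = toLex 0 := hsum
  have h2 : D m ≤ AddMonoidAlgebra.supDegree D (↑u : MvPolynomial (Fin n) K) :=
    Finset.le_sup hm
  exact hDinj (le_antisymm (h2.trans h1) (hbot _))

private lemma aux_two {P Q : MvPolynomial (Fin n) K} (hP : P ≠ 0) (hQ : Q ≠ 0) (i : Fin n)
    (hiP : ∃ m ∈ P.support, m i ≠ 0) (hiQ : ∃ m ∈ Q.support, m i ≠ 0) :
    ∃ a ∈ (P * Q).support, 2 ≤ a i := by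
  set D : (Fin n →₀ ℕ) → ℕ ×ₗ Lex (Fin n →₀ ℕ) :=
    fun m => toLex (m i, toLex m) with hDdef
  have hDinj : Function.Injective D := by
    intro a b hab
    have h2 : (ofLex (D a)).2 = (ofLex (D b)).2 := by rw [hab]
    exact h2
  have hadd : ∀ a b : Fin n →₀ ℕ, D (a + b) = D a + D b := by
    intro a b
    have : (a + b) i = a i + b i := Finsupp.add_apply a b i
    simp only [hDdef]
    rw [this]
    rfl
  have hlc : AddMonoidAlgebra.leadingCoeff D P * AddMonoidAlgebra.leadingCoeff D Q ≠ 0 :=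
    mul_ne_zero ((AddMonoidAlgebra.leadingCoeff_ne_zero hDinj).mpr hP)
      ((AddMonoidAlgebra.leadingCoeff_ne_zero hDinj).mpr hQ)
  have hmul := AddMonoidAlgebra.supDegree_mul hDinj hadd hlc hP hQ
  obtain ⟨a, ha, hae⟩ := AddMonoidAlgebra.exists_supDegree_mem_support D
    (mul_ne_zero hP hQ : P * Q ≠ 0)
  obtain ⟨aP, haP, haPe⟩ := AddMonoidAlgebra.exists_supDegree_mem_support D hP
  obtain ⟨aQ, haQ, haQe⟩ := AddMonoidAlgebra.exists_supDegree_mem_support D hQ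
  refine ⟨a, ha, ?_⟩
  have hsum : D a = D aP + D aQ := by rw [← hae, ← haPe, ← haQe, hmul]
  have h1 : a i = aP i + aQ i := congrArg (fun x => (ofLex x).1) hsum
  obtain ⟨mP, hmP, hmPi⟩ := hiP
  obtain ⟨mQ, hmQ, hmQi⟩ := hiQ
  have h2 : D mP ≤ D aP := haPe ▸ Finset.le_sup hmP
  have h3 : mP i ≤ aP i := by
    rcases Prod.Lex.le_iff.mp h2 with h | h
    · exact le_of_lt h
    · exact le_of_eq h.1
  have h4 : D mQ ≤ D aQ := haQe ▸ Finset.le_sup hmQ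
  have h5 : mQ i ≤ aQ i := by
    rcases Prod.Lex.le_iff.mp h4 with h | h
    · exact le_of_lt h
    · exact le_of_eq h.1
  omega

end Aux

/-- A matroid (with ground set all of `Fin n`) is connected if its set of bases
does not decompose as a product along a nontrivial partition of the ground set. -/
def MatroidConnected {n : ℕ} (M : Matroid (Fin n)) : Prop :=
  ∀ E' : Set (Fin n), E'.Nonempty → E'ᶜ.Nonempty →
    ¬ ∃ (B' B'' : Set (Set (Fin n))),
        (∀ b ∈ B', b ⊆ E') ∧ (∀ b ∈ B'', b ⊆ E'ᶜ) ∧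
        (∀ B : Set (Fin n), M.IsBase B ↔ ∃ b' ∈ B', ∃ b'' ∈ B'', B = b' ∪ b'')

set_option maxHeartbeats 1000000 in
/-- the matroid support polynomial of a connected matroid of
positive rank is irreducible. -/
theorem matroid_support_polynomial_irreducible {K : Type*} [Field K] {n : ℕ}
    (M : Matroid (Fin n)) (hE : M.E = Set.univ)
    (hconn : MatroidConnected M) (hrank : ∃ B : Set (Fin n), M.IsBase B ∧ B.Nonempty)
    (c : Finset (Fin n) → K)
    (hc : ∀ B : Finset (Fin n), M.IsBase (↑B : Set (Fin n)) → c B ≠ 0) :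
    Irreducible
      (∑ B ∈ Finset.univ.filter (fun B : Finset (Fin n) => M.IsBase (↑B : Set (Fin n))),
        C (c B) * ∏ i ∈ B, X i) := by
  set S : Finset (Finset (Fin n)) :=
    Finset.univ.filter (fun B : Finset (Fin n) => M.IsBase (↑B : Set (Fin n))) with hS
  have hmemS : ∀ B : Finset (Fin n), B ∈ S ↔ M.IsBase (↑B : Set (Fin n)) := by
    intro B; simp [hS]
  set d : Finset (Fin n) → (Fin n →₀ ℕ) := fun B => ∑ i ∈ B, Finsupp.single i 1 with hd
  have hdapp : ∀ (B : Finset (Fin n)) (j : Fin n), d B j = if j ∈ B then 1 else 0 := by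
    intro B j
    simp only [hd, Finsupp.finset_sum_apply, Finsupp.single_apply]
    exact Finset.sum_ite_eq' B j (fun _ => 1)
  have hdsupp : ∀ B : Finset (Fin n), (d B).support = B := by
    intro B
    ext j
    rw [Finsupp.mem_support_iff, hdapp]
    by_cases hj : j ∈ B <;> simp [hj]
  have hdinj : Function.Injective d := by
    intro A B h
    have := congrArg Finsupp.support h
    rwa [hdsupp, hdsupp] at this
  have hprod : ∀ B : Finset (Fin n),
      (∏ i ∈ B, X i : MvPolynomial (Fin n) K) = monomial (d B) 1 := by
    intro B
    rw [← prod_X_pow_eq_monomial, hdsupp]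
    refine Finset.prod_congr rfl fun j hj => ?_
    rw [hdapp, if_pos hj, pow_one]
  have hxi : (∑ B ∈ S, C (c B) * ∏ i ∈ B, X i : MvPolynomial (Fin n) K)
      = ∑ B ∈ S, monomial (d B) (c B) :=
    Finset.sum_congr rfl fun B _ => by rw [hprod B, C_mul_monomial, mul_one]
  rw [hxi]
  set ξ : MvPolynomial (Fin n) K := ∑ B ∈ S, monomial (d B) (c B) with hξ
  have hcoeff_d : ∀ F ∈ S, ξ.coeff (d F) = c F := by
    intro F hF
    rw [hξ, coeff_sum]
    rw [Finset.sum_eq_single F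
      (fun b _ hbne => by rw [coeff_monomial, if_neg (fun h => hbne (hdinj h))])
      (fun h => absurd hF h)]
    rw [coeff_monomial, if_pos rfl]
  have hsupp : ξ.support = S.image d := by
    ext m
    simp only [MvPolynomial.mem_support_iff, Finset.mem_image]
    constructor
    · intro hne
      by_contra hno
      push_neg at hno
      apply hne
      rw [hξ, coeff_sum]
      exact Finset.sum_eq_zero fun B hB => by
        rw [coeff_monomial, if_neg (hno B hB)]
    · rintro ⟨F, hF, rfl⟩
      rw [hcoeff_d F hF]
      exact hc F ((hmemS F).mp hF)
  have hsq : ∀ m ∈ ξ.support, ∀ j, m j ≤ 1 := by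
    intro m hm j
    rw [hsupp] at hm
    obtain ⟨F, _, rfl⟩ := Finset.mem_image.mp hm
    rw [hdapp]
    split <;> omega
  obtain ⟨B₀, hB₀, hB₀ne⟩ := hrank
  have hBF : (↑B₀.toFinset : Set (Fin n)) = B₀ := Set.coe_toFinset B₀
  have hF₀S : B₀.toFinset ∈ S := (hmemS _).mpr (by rw [hBF]; exact hB₀)
  have hξne : ξ ≠ 0 := fun h0 =>
    hc _ ((hmemS _).mp hF₀S) (by rw [← hcoeff_d _ hF₀S, h0, coeff_zero])
  constructor
  · -- not a unit
    intro hu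
    have hz := aux_support_of_isUnit hu (d B₀.toFinset)
      (by rw [hsupp]; exact Finset.mem_image_of_mem d hF₀S)
    obtain ⟨j, hj⟩ := hB₀ne
    have hj' : j ∈ B₀.toFinset := Set.mem_toFinset.mpr hj
    have h1 : d B₀.toFinset j = 1 := by rw [hdapp, if_pos hj']
    rw [hz] at h1
    simp at h1
  · intro P Q hPQ
    by_contra hcon
    push_neg at hcon
    obtain ⟨hPnu, hQnu⟩ := hcon
    have hPne : P ≠ 0 := by rintro rfl; rw [zero_mul] at hPQ; exact hξne hPQ
    have hQne : Q ≠ 0 := by rintro rfl; rw [mul_zero] at hPQ; exact hξne hPQ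
    have hdisj : ∀ i : Fin n,
        ¬((∃ m ∈ P.support, m i ≠ 0) ∧ (∃ m ∈ Q.support, m i ≠ 0)) := by
      rintro i ⟨h1, h2⟩
      obtain ⟨a, ha, h2le⟩ := aux_two hPne hQne i h1 h2
      have ham : a ∈ ξ.support := by rw [hPQ]; exact ha
      have := hsq a ham i
      omega
    set E' : Set (Fin n) := {i | ∃ m ∈ P.support, m i ≠ 0} with hE'
    have hne1 : E'.Nonempty := by
      by_contra hno
      apply hPnu
      apply aux_isUnit P hPne
      intro m hm
      by_contra hmne
      obtain ⟨j, hj⟩ := Finsupp.ne_iff.mp hmne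
      rw [Finsupp.zero_apply] at hj
      exact hno ⟨j, ⟨m, hm, hj⟩⟩
    have hne2 : E'ᶜ.Nonempty := by
      have : ∃ j, ∃ m ∈ Q.support, m j ≠ 0 := by
        by_contra hno
        push_neg at hno
        apply hQnu
        apply aux_isUnit Q hQne
        intro m hm
        ext j
        rw [Finsupp.zero_apply]
        exact hno j m hm
      obtain ⟨j, hjQ⟩ := this
      exact ⟨j, fun hjP => hdisj j ⟨hjP, hjQ⟩⟩
    apply hconn E' hne1 hne2
    refine ⟨{s | ∃ m ∈ P.support, s = (↑m.support : Set (Fin n))},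
            {s | ∃ m ∈ Q.support, s = (↑m.support : Set (Fin n))}, ?_, ?_, ?_⟩
    · rintro b ⟨m, hm, rfl⟩ j hj
      exact ⟨m, hm, Finsupp.mem_support_iff.mp (Finset.mem_coe.mp hj)⟩
    · rintro b ⟨m, hm, rfl⟩ j hj
      intro hjP
      exact hdisj j ⟨hjP, ⟨m, hm, Finsupp.mem_support_iff.mp (Finset.mem_coe.mp hj)⟩⟩
    · intro B
      constructor
      · intro hB
        have hBF' : (↑B.toFinset : Set (Fin n)) = B := Set.coe_toFinset B
        have hFS : B.toFinset ∈ S := (hmemS _).mpr (by rw [hBF']; exact hB)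
        have hdF : d B.toFinset ∈ (P * Q).support := by
          rw [← hPQ, hsupp]
          exact Finset.mem_image_of_mem d hFS
        obtain ⟨m, hm, m', hm', hsum⟩ := Finset.mem_add.mp (support_mul P Q hdF)
        refine ⟨(↑m.support : Set (Fin n)), ⟨m, hm, rfl⟩,
                (↑m'.support : Set (Fin n)), ⟨m', hm', rfl⟩, ?_⟩
        have hdsj : Disjoint m.support m'.support := by
          rw [Finset.disjoint_left]
          intro j hj hj'
          exact hdisj j ⟨⟨m, hm, Finsupp.mem_support_iff.mp hj⟩,
            ⟨m', hm', Finsupp.mem_support_iff.mp hj'⟩⟩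
        have hsupp_eq : (d B.toFinset).support = m.support ∪ m'.support := by
          rw [← hsum, Finsupp.support_add_eq hdsj]
        calc B = (↑B.toFinset : Set (Fin n)) := hBF'.symm
          _ = (↑(d B.toFinset).support : Set (Fin n)) := by rw [hdsupp]
          _ = (↑(m.support ∪ m'.support) : Set (Fin n)) := by rw [hsupp_eq]
          _ = (↑m.support : Set (Fin n)) ∪ (↑m'.support : Set (Fin n)) :=
            Finset.coe_union _ _
      · rintro ⟨b', ⟨m, hm, rfl⟩, b'', ⟨m', hm', rfl⟩, hBeq⟩
        have hdsj : Disjoint m.support m'.support := by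
          rw [Finset.disjoint_left]
          intro j hj hj'
          exact hdisj j ⟨⟨m, hm, Finsupp.mem_support_iff.mp hj⟩,
            ⟨m', hm', Finsupp.mem_support_iff.mp hj'⟩⟩
        have hkey : (P * Q).coeff (m + m') = P.coeff m * Q.coeff m' := by
          rw [coeff_mul]
          refine Finset.sum_eq_single (m, m') ?_ ?_
          · rintro ⟨a, b⟩ hab hne
            rw [Finset.HasAntidiagonal.mem_antidiagonal] at hab
            by_contra hne0
            have ha : a ∈ P.support := by
              rw [MvPolynomial.mem_support_iff]
              exact fun h => hne0 (by rw [h, zero_mul])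
            have hb : b ∈ Q.support := by
              rw [MvPolynomial.mem_support_iff]
              exact fun h => hne0 (by rw [h, mul_zero])
            have ham : a = m := by
              ext j
              by_cases hj : ∃ mm ∈ P.support, mm j ≠ 0
              · have hbj : b j = 0 := by
                  by_contra h'
                  exact hdisj j ⟨hj, ⟨b, hb, h'⟩⟩
                have hm'j : m' j = 0 := by
                  by_contra h'
                  exact hdisj j ⟨hj, ⟨m', hm', h'⟩⟩
                have := congrArg (fun f : Fin n →₀ ℕ => f j) hab
                simp only [Finsupp.add_apply] at this
                omega
              · push_neg at hj
                rw [hj a ha, hj m hm]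
            have hbm : b = m' := by
              have hab' : a + b = m + m' := hab
              rw [ham] at hab'
              exact add_left_cancel hab'
            exact hne (by rw [ham, hbm])
          · intro h
            exact absurd (Finset.HasAntidiagonal.mem_antidiagonal.mpr (by simp)) h
        have hmem : m + m' ∈ ξ.support := by
          rw [MvPolynomial.mem_support_iff, hPQ, hkey]
          exact mul_ne_zero (MvPolynomial.mem_support_iff.mp hm)
            (MvPolynomial.mem_support_iff.mp hm')
        rw [hsupp] at hmem
        obtain ⟨F, hFS, hdeq⟩ := Finset.mem_image.mp hmem
        have hFB : (↑F : Set (Fin n)) = (↑m.support : Set (Fin n)) ∪ (↑m'.support : Set (Fin n)) := by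
          calc (↑F : Set (Fin n)) = (↑(d F).support : Set (Fin n)) := by rw [hdsupp]
            _ = (↑(m + m').support : Set (Fin n)) := by rw [hdeq]
            _ = (↑(m.support ∪ m'.support) : Set (Fin n)) := by
                rw [Finsupp.support_add_eq hdsj]
            _ = _ := Finset.coe_union _ _
        rw [hBeq, ← hFB]
        exact (hmemS F).mp hFS
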